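/- Let n ≥ 2 and let A = (a_{ij}) be an n×n matrix of distinct indeterminates over a field of characteristic ≠ 2. For any indices i < k and j < l, the differential operator d_{ij}d_{kl} − d_{il}d_{kj} (the 2×2 minor of the corresponding submatrix of dual variables) annihilates the permanent Per(A) = Σ_{σ ∈ S_n} Π_i a_{i,σ(i)} under the contraction action. -/

import Mathlib

open MvPolynomial

/-- The permanent of the generic `n × n` matrix of indeterminates. -/
noncomputable def genericPerm (n : ℕ) (K : Type) [Field K] :
    MvPolynomial (Fin n × Fin n) K :=
  ∑ σ : Equiv.Perm (Fin n), ∏ i : Fin n, X (i, σ i)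

lemma pderiv_prod_X {n : ℕ} {K : Type} [Field K] (σ : Equiv.Perm (Fin n))
    (s : Finset (Fin n)) (p b : Fin n) :
    pderiv (p, b) (∏ m ∈ s, (X (m, σ m) : MvPolynomial (Fin n × Fin n) K)) =
      if p ∈ s ∧ σ p = b then ∏ m ∈ s.erase p, X (m, σ m) else 0 := by
  classical
  induction s using Finset.induction_on with
  | empty => simp
  | insert _ _ ha =>
    rename_i a s ih
    rw [Finset.prod_insert ha, pderiv_mul, ih]
    by_cases hpa : p = a
    · subst hpa
      have hps : p ∉ s := ha
      simp only [hps, false_and, if_false, mul_zero, add_zero,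
        Finset.erase_insert ha, Finset.mem_insert, true_or, true_and]
      by_cases hb : σ p = b
      · subst hb; simp
      · rw [if_neg hb, pderiv_X, Pi.single_eq_of_ne (by simp [hb]), zero_mul]
    · rw [pderiv_X, Pi.single_eq_of_ne (by simp; exact fun h _ => hpa h.symm), zero_mul, zero_add]
      rw [Finset.erase_insert_of_ne (Ne.symm hpa)]
      by_cases hc : p ∈ s ∧ σ p = b
      · rw [if_pos hc, if_pos ⟨Finset.mem_insert_of_mem hc.1, hc.2⟩,
          Finset.prod_insert (fun h => ha (Finset.mem_of_mem_erase h))]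
      · rw [if_neg hc, mul_zero, if_neg (by simpa [hpa] using hc)]

lemma pderiv_pderiv_prod_X {n : ℕ} {K : Type} [Field K] (σ : Equiv.Perm (Fin n))
    (i k j l : Fin n) (hik : i ≠ k) :
    pderiv (i, j) (pderiv (k, l) (∏ m : Fin n, (X (m, σ m) : MvPolynomial (Fin n × Fin n) K))) =
      if σ i = j ∧ σ k = l then
        ∏ m ∈ (Finset.univ.erase k).erase i, X (m, σ m) else 0 := by
  classical
  rw [pderiv_prod_X]
  by_cases hk : σ k = l
  · rw [if_pos ⟨Finset.mem_univ k, hk⟩, pderiv_prod_X]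
    by_cases hi : σ i = j
    · rw [if_pos ⟨Finset.mem_erase.2 ⟨hik, Finset.mem_univ i⟩, hi⟩, if_pos ⟨hi, hk⟩]
    · rw [if_neg (fun h => hi h.2), if_neg (fun h => hi h.1)]
  · simp [hk]

/-- each `2 × 2` minor of the dual variables annihilates the
permanent of the generic matrix. -/
theorem minor_annihilates_permanent (K : Type) [Field K] (h2 : (2 : K) ≠ 0)
    (n : ℕ) (hn : 2 ≤ n) (i k j l : Fin n) (hik : i < k) (hjl : j < l) :
    pderiv (i, j) (pderiv (k, l) (genericPerm n K)) -
      pderiv (i, l) (pderiv (k, j) (genericPerm n K)) = 0 := by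
  classical
  have hik' : i ≠ k := hik.ne
  have hjl' : j ≠ l := hjl.ne
  rw [sub_eq_zero, genericPerm, map_sum, map_sum, map_sum, map_sum]
  simp only [pderiv_pderiv_prod_X _ i k _ _ hik']
  refine Fintype.sum_bijective (fun σ => Equiv.swap j l * σ)
    (Equiv.mulLeft (Equiv.swap j l)).bijective _ _ (fun σ => ?_)
  by_cases hc : σ i = j ∧ σ k = l
  · have h1 : (Equiv.swap j l * σ) i = l := by
      simp [Equiv.Perm.mul_apply, hc.1]
    have h2 : (Equiv.swap j l * σ) k = j := by
      simp [Equiv.Perm.mul_apply, hc.2]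
    rw [if_pos hc, if_pos ⟨h1, h2⟩]
    refine Finset.prod_congr rfl (fun m hm => ?_)
    rw [Finset.mem_erase, Finset.mem_erase] at hm
    have hmj : σ m ≠ j := fun h => hm.1 (σ.injective (h.trans hc.1.symm))
    have hml : σ m ≠ l := fun h => hm.2.1 (σ.injective (h.trans hc.2.symm))
    rw [Equiv.Perm.mul_apply, Equiv.swap_apply_of_ne_of_ne hmj hml]
  · rw [if_neg hc, if_neg ?_]
    intro ⟨h1, h2⟩
    exact hc ⟨(Equiv.swap j l).injective (by simpa using h1),
      (Equiv.swap j l).injective (by simpa using h2)⟩
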